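/- Let (π₁, π₂) be a chainable pair of patterns and Aᵢ ∈ D^{πᵢ} for i = 1, 2. (1) If A₁ is left-r(π₁,π₂)-unitary and A₂ is left-r-unitary for some positive integer r, then the product A₁A₂, which belongs to D^{π₁*π₂}, is left-r-unitary. (2) If A₁ is right-r-unitary for some positive integer r and A₂ is right-r(π₁,π₂)-unitary, then the product A₁A₂ ∈ D^{π₁*π₂} is right-r-unitary. -/

import Mathlib

/-- A *pattern* is a tuple `(a, b, c, d)` of (positive) natural numbers. -/
structure Pattern where
  a : ℕ
  b : ℕ
  c : ℕ
  d : ℕ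

namespace Pattern

/-- The entries of a pattern are positive integers. -/
def Pos (π : Pattern) : Prop := 0 < π.a ∧ 0 < π.b ∧ 0 < π.c ∧ 0 < π.d

/-- Number of rows `a*b*d` of a `π`-factor. -/
def rows (π : Pattern) : ℕ := π.a * π.b * π.d

/-- Number of columns `a*c*d` of a `π`-factor. -/
def cols (π : Pattern) : ℕ := π.a * π.c * π.d

/-- `r(π₁, π₂) = a₁c₁/a₂ (= b₂d₂/d₁)`. -/
def rk (π₁ π₂ : Pattern) : ℕ := π₁.a * π₁.c / π₂.a

/-- A pair of patterns is *chainable* if `a₁c₁/a₂ = b₂d₂/d₁` is a positive integer,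
`a₁ ∣ a₂` and `d₂ ∣ d₁`. -/
def Chainable (π₁ π₂ : Pattern) : Prop :=
  π₂.a ∣ π₁.a * π₁.c ∧ π₁.d ∣ π₂.b * π₂.d ∧
    π₁.a * π₁.c / π₂.a = π₂.b * π₂.d / π₁.d ∧
    0 < π₁.a * π₁.c / π₂.a ∧ π₁.a ∣ π₂.a ∧ π₂.d ∣ π₁.d

/-- `π₁ * π₂ := (a₁, b₁d₁/d₂, a₂c₂/a₁, d₂)`. -/
instance : Mul Pattern :=
  ⟨fun π₁ π₂ => ⟨π₁.a, π₁.b * π₁.d / π₂.d, π₂.a * π₂.c / π₁.a, π₂.d⟩⟩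

/-- `‖π‖₀ := a*b*c*d`. -/
def norm0 (π : Pattern) : ℕ := π.a * π.b * π.c * π.d

end Pattern

open scoped Kronecker

/-- The flattening equivalence `(Fin a × Fin b) × Fin d ≃ Fin (a*b*d)`. -/
def kron3Equiv (a b d : ℕ) : (Fin a × Fin b) × Fin d ≃ Fin (a * b * d) :=
  (finProdFinEquiv.prodCongr (Equiv.refl (Fin d))).trans finProdFinEquiv

/-- The support matrix `S_π = I_a ⊗ 1_{b×c} ⊗ I_d ∈ {0,1}^{abd × acd}`. -/
def Pattern.S (π : Pattern) : Matrix (Fin π.rows) (Fin π.cols) ℕ :=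
  Matrix.reindex (kron3Equiv π.a π.b π.d) (kron3Equiv π.a π.c π.d)
    ((1 : Matrix (Fin π.a) (Fin π.a) ℕ) ⊗ₖ
      (Matrix.of fun _ _ => (1 : ℕ) : Matrix (Fin π.b) (Fin π.c) ℕ) ⊗ₖ
      (1 : Matrix (Fin π.d) (Fin π.d) ℕ))

/-- The support matrix `S_π`, extended by zero to an `ℕ × ℕ`-indexed array. -/
def SpatN (π : Pattern) : ℕ → ℕ → ℕ := fun i j =>
  if h : i < π.rows ∧ j < π.cols then π.S ⟨i, h.1⟩ ⟨j, h.2⟩ else 0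

/-- `X` is (the extension by zero of) a `π`-factor: it vanishes outside the support of `S_π`. -/
def IsFactorN (π : Pattern) (X : ℕ → ℕ → ℂ) : Prop :=
  ∀ i j, SpatN π i j = 0 → X i j = 0

/-- Product of matrices encoded as finitely supported `ℕ × ℕ`-indexed arrays. -/
noncomputable def nmul (f g : ℕ → ℕ → ℂ) : ℕ → ℕ → ℂ := fun i j => ∑' k, f i k * g k j

/-- `nprod X k = X 0 * X 1 * ⋯ * X k`. -/
noncomputable def nprod (X : ℕ → ℕ → ℕ → ℂ) : ℕ → ℕ → ℕ → ℂ
  | 0 => X 0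
  | k + 1 => nmul (nprod X k) (X (k + 1))

/-- Frobenius norm. -/
noncomputable def nfrob (f : ℕ → ℕ → ℂ) : ℝ := Real.sqrt (∑' i, ∑' j, ‖f i j‖ ^ 2)

/-- `A` is (the extension by zero of) a matrix of size `m × n`. -/
def SuppIn (m n : ℕ) (A : ℕ → ℕ → ℂ) : Prop := ∀ i j, A i j ≠ 0 → i < m ∧ j < n

/-- A `π`-factor `X` is *left-`r`-unitary* if `r ∣ c` and `‖XY‖_F = ‖Y‖_F` for every
`π'`-factor `Y` with `(π, π')` chainable and `r(π, π') = r`. -/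
def LeftRUnitary (π : Pattern) (r : ℕ) (X : ℕ → ℕ → ℂ) : Prop :=
  r ∣ π.c ∧ ∀ π' : Pattern, π'.Pos → Pattern.Chainable π π' → Pattern.rk π π' = r →
    ∀ Y : ℕ → ℕ → ℂ, IsFactorN π' Y → nfrob (nmul X Y) = nfrob Y

/-- A `π`-factor `X` is *right-`r`-unitary* if `r ∣ b` and `‖YX‖_F = ‖Y‖_F` for every
`π'`-factor `Y` with `(π', π)` chainable and `r(π', π) = r`. -/
def RightRUnitary (π : Pattern) (r : ℕ) (X : ℕ → ℕ → ℂ) : Prop :=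
  r ∣ π.b ∧ ∀ π' : Pattern, π'.Pos → Pattern.Chainable π' π → Pattern.rk π' π = r →
    ∀ Y : ℕ → ℕ → ℂ, IsFactorN π' Y → nfrob (nmul Y X) = nfrob Y
lemma spat_ne (π : Pattern) (i j : ℕ) :
    SpatN π i j ≠ 0 ↔ i < π.rows ∧ j < π.cols ∧
      i / π.d / π.b = j / π.d / π.c ∧ i % π.d = j % π.d := by
  unfold SpatN
  split
  · rename_i h
    unfold Pattern.rows Pattern.cols at *
    simp only [Pattern.S, kron3Equiv, Matrix.reindex_apply, Matrix.submatrix_apply,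
      Equiv.symm_trans_apply, Equiv.prodCongr_symm, Equiv.prodCongr_apply,
      finProdFinEquiv_symm_apply, Prod.map, Equiv.refl_symm, Equiv.refl_apply,
      Matrix.kroneckerMap_apply, Matrix.one_apply, Matrix.of_apply, Fin.divNat, Fin.modNat,
      mul_one, Fin.mk.injEq, mul_ne_zero_iff, ne_eq, ite_eq_right_iff, not_forall]
    simp only [h.1, h.2, true_and]
    exact ⟨fun h' => ⟨h'.1.1, h'.2.1⟩, fun h' => ⟨⟨h'.1, one_ne_zero⟩, h'.2, one_ne_zero⟩⟩
  · rename_i h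
    simp only [ne_eq, not_true_eq_false, false_iff]
    intro hr
    exact h ⟨hr.1, hr.2.1⟩
namespace Pattern
@[simp] lemma mul_a (π₁ π₂ : Pattern) : (π₁ * π₂).a = π₁.a := rfl
@[simp] lemma mul_b (π₁ π₂ : Pattern) : (π₁ * π₂).b = π₁.b * π₁.d / π₂.d := rfl
@[simp] lemma mul_c (π₁ π₂ : Pattern) : (π₁ * π₂).c = π₂.a * π₂.c / π₁.a := rfl
@[simp] lemma mul_d (π₁ π₂ : Pattern) : (π₁ * π₂).d = π₂.d := rfl

lemma chain_key {π₁ π₂ : Pattern} (h : Chainable π₁ π₂) :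
    π₁.a * π₁.c * π₁.d = π₂.a * (π₂.b * π₂.d) := by
  obtain ⟨h1, h2, h3, h4, h5, h6⟩ := h
  calc π₁.a * π₁.c * π₁.d = π₂.a * (π₁.a * π₁.c / π₂.a) * π₁.d := by
        rw [Nat.mul_div_cancel' h1]
    _ = π₂.a * (π₂.b * π₂.d / π₁.d * π₁.d) := by rw [h3]; ring
    _ = π₂.a * (π₂.b * π₂.d) := by rw [Nat.div_mul_cancel h2]

lemma mul_rows {π₁ π₂ : Pattern} (h : Chainable π₁ π₂) : (π₁ * π₂).rows = π₁.rows := by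
  have h6 : π₂.d ∣ π₁.d := h.2.2.2.2.2
  have : π₂.d ∣ π₁.b * π₁.d := Dvd.dvd.mul_left h6 _
  simp only [rows, mul_a, mul_b, mul_d]
  calc π₁.a * (π₁.b * π₁.d / π₂.d) * π₂.d = π₁.a * (π₁.b * π₁.d / π₂.d * π₂.d) := by ring
    _ = π₁.a * (π₁.b * π₁.d) := by rw [Nat.div_mul_cancel this]
    _ = π₁.a * π₁.b * π₁.d := by ring

lemma mul_cols {π₁ π₂ : Pattern} (h : Chainable π₁ π₂) : (π₁ * π₂).cols = π₂.cols := by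
  have h5 : π₁.a ∣ π₂.a := h.2.2.2.2.1
  have : π₁.a ∣ π₂.a * π₂.c := Dvd.dvd.mul_right h5 _
  simp only [cols, mul_a, mul_c, mul_d]
  rw [Nat.mul_div_cancel' this]

lemma cols_eq_rows {π₁ π₂ : Pattern} (h : Chainable π₁ π₂) : π₁.cols = π₂.rows := by
  have := chain_key h
  simp only [cols, rows]
  rw [mul_assoc] at this ⊢
  rw [this]; ring

lemma mul_pos_pat {π₁ π₂ : Pattern} (h : Chainable π₁ π₂) (h₁ : π₁.Pos) (h₂ : π₂.Pos) :
    (π₁ * π₂).Pos := by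
  obtain ⟨ha1, hb1, hc1, hd1⟩ := h₁
  obtain ⟨ha2, hb2, hc2, hd2⟩ := h₂
  refine ⟨ha1, ?_, ?_, hd2⟩
  · exact Nat.div_pos (Nat.le_of_dvd (by positivity) (Dvd.dvd.mul_left h.2.2.2.2.2 _)) hd2
  · exact Nat.div_pos (Nat.le_of_dvd (by positivity) (Dvd.dvd.mul_right h.2.2.2.2.1 _)) ha1
end Pattern
lemma support_step {a₁ b₁ c₁ d₁ a₂ b₂ c₂ d₂ i k j : ℕ}
    (ha₁ : 0 < a₁) (hd₂ : 0 < d₂)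
    (ha : a₁ ∣ a₂) (hd : d₂ ∣ d₁)
    (key : a₁ * c₁ * d₁ = a₂ * (b₂ * d₂))
    (e1 : i / d₁ / b₁ = k / d₁ / c₁) (m1 : i % d₁ = k % d₁)
    (e2 : k / d₂ / b₂ = j / d₂ / c₂) (m2 : k % d₂ = j % d₂) :
    i / d₂ / (b₁ * d₁ / d₂) = j / d₂ / (a₂ * c₂ / a₁) ∧ i % d₂ = j % d₂ := by
  obtain ⟨t, ht⟩ := ha
  obtain ⟨s, hs⟩ := hd
  subst ht hs
  have hbd : b₁ * (d₂ * s) / d₂ = b₁ * s := by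
    rw [show b₁ * (d₂ * s) = b₁ * s * d₂ by ring, Nat.mul_div_cancel _ hd₂]
  have hac : a₁ * t * c₂ / a₁ = t * c₂ := by
    rw [mul_assoc, Nat.mul_div_cancel_left _ ha₁]
  have h' : a₁ * d₂ * (c₁ * s) = a₁ * d₂ * (t * b₂) := by
    rw [show a₁ * d₂ * (c₁ * s) = a₁ * c₁ * (d₂ * s) by ring, key]; ring
  have hkey : c₁ * s = t * b₂ := Nat.eq_of_mul_eq_mul_left (by positivity) h'
  rw [Nat.div_div_eq_div_mul, Nat.div_div_eq_div_mul] at e1 e2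
  constructor
  · rw [hbd, hac, Nat.div_div_eq_div_mul, Nat.div_div_eq_div_mul]
    calc i / (d₂ * (b₁ * s)) = i / (d₂ * s * b₁) := by congr 1; ring
      _ = k / (d₂ * s * c₁) := e1
      _ = k / (d₂ * b₂ * t) := by rw [show d₂ * s * c₁ = d₂ * (c₁ * s) by ring, hkey, show d₂ * (t * b₂) = d₂ * b₂ * t by ring]
      _ = k / (d₂ * b₂) / t := by rw [Nat.div_div_eq_div_mul]
      _ = j / (d₂ * c₂) / t := by rw [e2]
      _ = j / (d₂ * (t * c₂)) := by rw [Nat.div_div_eq_div_mul]; congr 1; ring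
  · calc i % d₂ = i % (d₂ * s) % d₂ := (Nat.mod_mod_of_dvd i ⟨s, rfl⟩).symm
      _ = k % (d₂ * s) % d₂ := by rw [m1]
      _ = k % d₂ := Nat.mod_mod_of_dvd k ⟨s, rfl⟩
      _ = j % d₂ := m2

lemma factor_mul {π₁ π₂ : Pattern} (h₁ : π₁.Pos) (h₂ : π₂.Pos)
    (hch : Pattern.Chainable π₁ π₂) {X Y : ℕ → ℕ → ℂ}
    (hX : IsFactorN π₁ X) (hY : IsFactorN π₂ Y) :
    IsFactorN (π₁ * π₂) (nmul X Y) := by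
  intro i j h0
  have hterm : ∀ k, X i k * Y k j = 0 := by
    intro k
    by_contra hne
    have hx : X i k ≠ 0 := fun h => hne (by rw [h, zero_mul])
    have hy : Y k j ≠ 0 := fun h => hne (by rw [h, mul_zero])
    have s1 : SpatN π₁ i k ≠ 0 := fun h => hx (hX i k h)
    have s2 : SpatN π₂ k j ≠ 0 := fun h => hy (hY k j h)
    rw [spat_ne] at s1 s2
    obtain ⟨hi, hk, e1, m1⟩ := s1
    obtain ⟨hk', hj, e2, m2⟩ := s2
    have step := support_step h₁.1 h₂.2.2.2 hch.2.2.2.2.1 hch.2.2.2.2.2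
      (Pattern.chain_key hch) e1 m1 e2 m2
    have : SpatN (π₁ * π₂) i j ≠ 0 := by
      rw [spat_ne]
      exact ⟨by rwa [Pattern.mul_rows hch], by rwa [Pattern.mul_cols hch],
        by simpa using step.1, by simpa using step.2⟩
    exact this h0
  calc nmul X Y i j = ∑' k, (0 : ℂ) := tsum_congr hterm
    _ = 0 := tsum_zero
lemma chain_left_step {π₁ π₂ π' : Pattern} {r : ℕ}
    (hch : Pattern.Chainable π₁ π₂) (hr : r ∣ π₂.c) (hrpos : 0 < r)
    (hch' : Pattern.Chainable (π₁ * π₂) π') (hrk : Pattern.rk (π₁ * π₂) π' = r) :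
    Pattern.Chainable π₂ π' ∧ Pattern.rk π₂ π' = r := by
  have hAC : π₁.a * (π₂.a * π₂.c / π₁.a) = π₂.a * π₂.c :=
    Nat.mul_div_cancel' (Dvd.dvd.mul_right hch.2.2.2.2.1 _)
  obtain ⟨c1, c2, c3, c4, c5, c6⟩ := hch'
  simp only [Pattern.mul_a, Pattern.mul_b, Pattern.mul_c, Pattern.mul_d, hAC] at c1 c2 c3 c4 c5 c6
  unfold Pattern.rk at hrk
  simp only [Pattern.mul_a, Pattern.mul_c, hAC] at hrk
  obtain ⟨u, hu⟩ := hr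
  have heq : π₂.a * π₂.c = π'.a * r := Nat.eq_mul_of_div_eq_right c1 hrk
  have hau : π₂.a * u * r = π'.a * r := by rw [← heq, hu]; ring
  have hdvd : π₂.a ∣ π'.a := ⟨u, (Nat.eq_of_mul_eq_mul_right hrpos hau).symm⟩
  exact ⟨⟨c1, c2, c3, hrk ▸ hrpos, hdvd, c6⟩, hrk⟩

lemma chain_right_step {π' π₁ π₂ : Pattern} {r : ℕ}
    (hch : Pattern.Chainable π₁ π₂) (hr : r ∣ π₁.b) (hrpos : 0 < r)
    (hch' : Pattern.Chainable π' (π₁ * π₂)) (hrk : Pattern.rk π' (π₁ * π₂) = r) :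
    Pattern.Chainable π' π₁ ∧ Pattern.rk π' π₁ = r := by
  have hBD : π₁.b * π₁.d / π₂.d * π₂.d = π₁.b * π₁.d :=
    Nat.div_mul_cancel (Dvd.dvd.mul_left hch.2.2.2.2.2 _)
  obtain ⟨c1, c2, c3, c4, c5, c6⟩ := hch'
  simp only [Pattern.mul_a, Pattern.mul_b, Pattern.mul_c, Pattern.mul_d, hBD] at c1 c2 c3 c4 c5 c6
  unfold Pattern.rk at hrk
  simp only [Pattern.mul_a] at hrk
  obtain ⟨u, hu⟩ := hr
  have heq : π₁.b * π₁.d = π'.d * r := Nat.eq_mul_of_div_eq_right c2 (by rw [← c3, hrk])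
  have hdu : π₁.d * u * r = π'.d * r := by rw [← heq, hu]; ring
  have hdvd : π₁.d ∣ π'.d := ⟨u, (Nat.eq_of_mul_eq_mul_right hrpos hdu).symm⟩
  exact ⟨⟨c1, c2, by rw [hrk, ← c3, hrk], hrk ▸ hrpos, c5, hdvd⟩, hrk⟩

lemma chain_assoc_left {π₁ π₂ π₃ : Pattern}
    (h12 : Pattern.Chainable π₁ π₂) (h23 : Pattern.Chainable π₂ π₃) :
    Pattern.Chainable π₁ (π₂ * π₃) ∧ Pattern.rk π₁ (π₂ * π₃) = Pattern.rk π₁ π₂ := by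
  have hBD : π₂.b * π₂.d / π₃.d * π₃.d = π₂.b * π₂.d :=
    Nat.div_mul_cancel (Dvd.dvd.mul_left h23.2.2.2.2.2 _)
  obtain ⟨c1, c2, c3, c4, c5, c6⟩ := h12
  refine ⟨⟨?_, ?_, ?_, ?_, ?_, ?_⟩, rfl⟩
  · simpa only [Pattern.mul_a] using c1
  · simpa only [Pattern.mul_b, Pattern.mul_d, hBD] using c2
  · simpa only [Pattern.mul_a, Pattern.mul_b, Pattern.mul_d, hBD] using c3
  · simpa only [Pattern.mul_a] using c4
  · simpa only [Pattern.mul_a] using c5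
  · simp only [Pattern.mul_d]
    exact dvd_trans h23.2.2.2.2.2 c6

lemma chain_assoc_right {π₀ π₁ π₂ : Pattern}
    (h01 : Pattern.Chainable π₀ π₁) (h12 : Pattern.Chainable π₁ π₂) :
    Pattern.Chainable (π₀ * π₁) π₂ ∧ Pattern.rk (π₀ * π₁) π₂ = Pattern.rk π₁ π₂ := by
  have hAC : π₀.a * (π₁.a * π₁.c / π₀.a) = π₁.a * π₁.c :=
    Nat.mul_div_cancel' (Dvd.dvd.mul_right h01.2.2.2.2.1 _)
  obtain ⟨c1, c2, c3, c4, c5, c6⟩ := h12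
  constructor
  · refine ⟨?_, ?_, ?_, ?_, ?_, ?_⟩
    · simpa only [Pattern.mul_a, Pattern.mul_c, hAC] using c1
    · simpa only [Pattern.mul_d] using c2
    · simpa only [Pattern.mul_a, Pattern.mul_c, Pattern.mul_d, hAC] using c3
    · simpa only [Pattern.mul_a, Pattern.mul_c, hAC] using c4
    · simp only [Pattern.mul_a]
      exact dvd_trans h01.2.2.2.2.1 c5
    · simpa only [Pattern.mul_d] using c6
  · unfold Pattern.rk
    simp only [Pattern.mul_a, Pattern.mul_c, hAC]
lemma factor_col_bound {π : Pattern} {X : ℕ → ℕ → ℂ} (hX : IsFactorN π X) :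
    ∀ i k, π.cols ≤ k → X i k = 0 := by
  intro i k hk
  apply hX
  unfold SpatN
  rw [dif_neg]
  intro h
  omega

lemma nmul_assoc {f g h : ℕ → ℕ → ℂ} (K M : ℕ)
    (hf : ∀ i k, K ≤ k → f i k = 0) (hg : ∀ k j, M ≤ j → g k j = 0) :
    nmul (nmul f g) h = nmul f (nmul g h) := by
  funext i j
  unfold nmul
  have inner1 : ∀ k, (∑' l, f i l * g l k) = ∑ l ∈ Finset.range K, f i l * g l k :=
    fun k => tsum_eq_sum (fun l hl => by rw [hf i l (by simpa using hl), zero_mul])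
  have inner2 : ∀ l, (∑' k, g l k * h k j) = ∑ k ∈ Finset.range M, g l k * h k j :=
    fun l => tsum_eq_sum (fun k hk => by rw [hg l k (by simpa using hk), zero_mul])
  calc (∑' k, (∑' l, f i l * g l k) * h k j)
      = ∑' k, (∑ l ∈ Finset.range K, f i l * g l k) * h k j := by
        exact tsum_congr fun k => by rw [inner1]
    _ = ∑ k ∈ Finset.range M, (∑ l ∈ Finset.range K, f i l * g l k) * h k j := by
        refine tsum_eq_sum fun k hk => ?_
        have : ∀ l ∈ Finset.range K, f i l * g l k = 0 := fun l _ => by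
          rw [hg l k (by simpa using hk), mul_zero]
        rw [Finset.sum_eq_zero this, zero_mul]
    _ = ∑ k ∈ Finset.range M, ∑ l ∈ Finset.range K, f i l * (g l k * h k j) := by
        refine Finset.sum_congr rfl fun k _ => ?_
        rw [Finset.sum_mul]
        exact Finset.sum_congr rfl fun l _ => by ring
    _ = ∑ l ∈ Finset.range K, ∑ k ∈ Finset.range M, f i l * (g l k * h k j) :=
        Finset.sum_comm
    _ = ∑ l ∈ Finset.range K, f i l * ∑ k ∈ Finset.range M, g l k * h k j := by
        refine Finset.sum_congr rfl fun l _ => ?_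
        rw [Finset.mul_sum]
    _ = ∑ l ∈ Finset.range K, f i l * ∑' k, g l k * h k j := by
        refine Finset.sum_congr rfl fun l _ => by rw [inner2]
    _ = ∑' l, f i l * ∑' k, g l k * h k j := by
        refine (tsum_eq_sum fun l hl => ?_).symm
        rw [hf i l (by simpa using hl), zero_mul]


/-- **Lemma (stability of unitarity under multiplication).** For a chainable pair `(π₁, π₂)`
and factors `Aᵢ ∈ D^{πᵢ}`:
(1) if `A₁` is left-`r(π₁,π₂)`-unitary and `A₂` is left-`r`-unitary, then `A₁A₂ ∈ D^{π₁*π₂}`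
is left-`r`-unitary; (2) if `A₁` is right-`r`-unitary and `A₂` is right-`r(π₁,π₂)`-unitary,
then `A₁A₂ ∈ D^{π₁*π₂}` is right-`r`-unitary. -/
theorem unitary_stable_mul (π₁ π₂ : Pattern)
    (h₁ : π₁.Pos) (h₂ : π₂.Pos) (hch : Pattern.Chainable π₁ π₂) :
    (∀ r : ℕ, 0 < r → ∀ A₁ A₂ : ℕ → ℕ → ℂ,
      IsFactorN π₁ A₁ → IsFactorN π₂ A₂ →
      LeftRUnitary π₁ (Pattern.rk π₁ π₂) A₁ → LeftRUnitary π₂ r A₂ →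
      IsFactorN (π₁ * π₂) (nmul A₁ A₂) ∧ LeftRUnitary (π₁ * π₂) r (nmul A₁ A₂)) ∧
    (∀ r : ℕ, 0 < r → ∀ A₁ A₂ : ℕ → ℕ → ℂ,
      IsFactorN π₁ A₁ → IsFactorN π₂ A₂ →
      RightRUnitary π₁ r A₁ → RightRUnitary π₂ (Pattern.rk π₁ π₂) A₂ →
      IsFactorN (π₁ * π₂) (nmul A₁ A₂) ∧ RightRUnitary (π₁ * π₂) r (nmul A₁ A₂)) := by
  constructor
  · intro r hrpos A₁ A₂ hA₁ hA₂ hL₁ hL₂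
    refine ⟨factor_mul h₁ h₂ hch hA₁ hA₂, ?_, ?_⟩
    · obtain ⟨t, ht⟩ := hch.2.2.2.2.1
      have hc : (π₁ * π₂).c = t * π₂.c := by
        simp only [Pattern.mul_c]
        rw [ht, mul_assoc, Nat.mul_div_cancel_left _ h₁.1]
      rw [hc]
      exact Dvd.dvd.mul_left hL₂.1 t
    · intro π' hπ' hch' hrk Y hY
      obtain ⟨hstep, hrk2⟩ := chain_left_step hch hL₂.1 hrpos hch' hrk
      obtain ⟨hchB, hrkB⟩ := chain_assoc_left hch hstep
      have hposm : (π₂ * π').Pos := Pattern.mul_pos_pat hstep h₂ hπ'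
      have hfac2 : IsFactorN (π₂ * π') (nmul A₂ Y) := factor_mul h₂ hπ' hstep hA₂ hY
      rw [nmul_assoc π₁.cols π₂.cols (factor_col_bound hA₁) (factor_col_bound hA₂),
        hL₁.2 (π₂ * π') hposm hchB hrkB (nmul A₂ Y) hfac2]
      exact hL₂.2 π' hπ' hstep hrk2 Y hY
  · intro r hrpos A₁ A₂ hA₁ hA₂ hR₁ hR₂
    refine ⟨factor_mul h₁ h₂ hch hA₁ hA₂, ?_, ?_⟩
    · obtain ⟨s, hs⟩ := hch.2.2.2.2.2
      have hb : (π₁ * π₂).b = π₁.b * s := by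
        simp only [Pattern.mul_b]
        rw [hs, show π₁.b * (π₂.d * s) = π₁.b * s * π₂.d by ring,
          Nat.mul_div_cancel _ h₂.2.2.2]
      rw [hb]
      exact Dvd.dvd.mul_right hR₁.1 s
    · intro π' hπ' hch' hrk Y hY
      obtain ⟨hstep, hrk1⟩ := chain_right_step hch hR₁.1 hrpos hch' hrk
      obtain ⟨hchB, hrkB⟩ := chain_assoc_right hstep hch
      have hposm : (π' * π₁).Pos := Pattern.mul_pos_pat hstep hπ' h₁
      have hfac2 : IsFactorN (π' * π₁) (nmul Y A₁) := factor_mul hπ' h₁ hstep hY hA₁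
      rw [← nmul_assoc π'.cols π₁.cols (factor_col_bound hY) (factor_col_bound hA₁),
        hR₂.2 (π' * π₁) hposm hchB hrkB (nmul Y A₁) hfac2]
      exact hR₁.2 π' hπ' hstep hrk1 Y hY
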